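/- Let T(λ) = -B_0 + λI + B_1/(λ - α) where B_0, B_1 are n×n complex matrices and α ∈ ℂ. If λ_0 ∈ ℂ is an eigenvalue of T(λ), then |λ_0| ≤ R, where R is the unique positive root of the real quadratic u(x) = x² - ‖B_0 + αI‖x - ‖αB_0 + B_1‖, i.e., R = (‖B_0 + αI‖ + √(‖B_0 + αI‖² + 4‖αB_0 + B_1‖))/2. -/

import Mathlib

/-- For `T(λ) = -B₀ + λI + B₁/(λ - α)`, every eigenvalue `λ₀` of `T`
satisfies `|λ₀| ≤ R`, where
`R = (‖B₀ + αI‖ + √(‖B₀ + αI‖² + 4‖αB₀ + B₁‖))/2` is the unique positive root of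
`u(x) = x² - ‖B₀ + αI‖x - ‖αB₀ + B₁‖`.  The operator norm is induced by the vector
norm on `V`. -/
theorem stmt_13 (V : Type*) [NormedAddCommGroup V] [NormedSpace ℂ V]
    (B0 B1 : V →L[ℂ] V) (a : ℂ)
    (lam0 : ℂ) (hpole : lam0 ≠ a) (v : V) (hv : v ≠ 0)
    (heig : (-B0 + lam0 • (1 : V →L[ℂ] V) + (lam0 - a)⁻¹ • B1) v = 0) :
    ‖lam0‖ ≤
      (‖B0 + a • (1 : V →L[ℂ] V)‖ +
        Real.sqrt (‖B0 + a • (1 : V →L[ℂ] V)‖ ^ 2 + 4 * ‖a • B0 + B1‖)) / 2 := by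
  have hva : (lam0 - a) ≠ 0 := sub_ne_zero.mpr hpole
  have h1 : -(B0 v) + lam0 • v + (lam0 - a)⁻¹ • (B1 v) = 0 := by
    simpa [ContinuousLinearMap.add_apply, ContinuousLinearMap.smul_apply] using heig
  have hB1 : B1 v = (lam0 - a) • (B0 v - lam0 • v) := by
    have h2 : (lam0 - a)⁻¹ • (B1 v) = B0 v - lam0 • v := by
      have h := eq_neg_of_add_eq_zero_right h1
      rw [h]; abel
    have := congrArg (fun w => (lam0 - a) • w) h2
    simpa [smul_smul, mul_inv_cancel₀ hva] using this
  have h2 : lam0 ^ 2 • v =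
      lam0 • ((B0 + a • (1 : V →L[ℂ] V)) v) - ((a • B0 + B1) v) := by
    simp only [ContinuousLinearMap.add_apply, ContinuousLinearMap.smul_apply,
      ContinuousLinearMap.one_apply, hB1]
    module
  set A := ‖B0 + a • (1 : V →L[ℂ] V)‖ with hA
  set C := ‖a • B0 + B1‖ with hC
  set r := ‖lam0‖ with hr
  have hvpos : (0:ℝ) < ‖v‖ := norm_pos_iff.mpr hv
  have hnorm : r ^ 2 * ‖v‖ ≤ r * (A * ‖v‖) + C * ‖v‖ := by
    have := congrArg norm h2
    rw [norm_smul] at this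
    have hle : ‖lam0 ^ 2‖ * ‖v‖ ≤ ‖lam0 • ((B0 + a • (1 : V →L[ℂ] V)) v)‖
        + ‖(a • B0 + B1) v‖ := this ▸ norm_sub_le _ _
    have h3 : ‖lam0 • ((B0 + a • (1 : V →L[ℂ] V)) v)‖ ≤ r * (A * ‖v‖) := by
      rw [norm_smul]
      exact mul_le_mul_of_nonneg_left ((B0 + a • (1 : V →L[ℂ] V)).le_opNorm v)
        (norm_nonneg _)
    have h4 : ‖(a • B0 + B1) v‖ ≤ C * ‖v‖ := (a • B0 + B1).le_opNorm v
    calc r ^ 2 * ‖v‖ = ‖lam0 ^ 2‖ * ‖v‖ := by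
          rw [norm_pow]
      _ ≤ _ := hle
      _ ≤ r * (A * ‖v‖) + C * ‖v‖ := add_le_add h3 h4
  have hkey : r ^ 2 ≤ r * A + C := by
    have := le_of_mul_le_mul_right (by linarith [hnorm] : r ^ 2 * ‖v‖ ≤ (r * A + C) * ‖v‖) hvpos
    exact this
  have hA0 : 0 ≤ A := norm_nonneg _
  have hC0 : 0 ≤ C := norm_nonneg _
  have hr0 : 0 ≤ r := norm_nonneg _
  have hs0 : 0 ≤ A ^ 2 + 4 * C := by nlinarith
  have hs : Real.sqrt (A ^ 2 + 4 * C) ^ 2 = A ^ 2 + 4 * C := Real.sq_sqrt hs0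
  have hsnn : 0 ≤ Real.sqrt (A ^ 2 + 4 * C) := Real.sqrt_nonneg _
  nlinarith [sq_nonneg (2 * r - A - Real.sqrt (A ^ 2 + 4 * C)), sq_nonneg (2 * r - A)]
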